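/- arXiv:1905.03054 — 4 statements merged into one kernel-verified Lean document; each statement's English description precedes it below -/
import Mathlib

section
/- Let f ∈ ℂ[z₁,z₂] be a homogeneous polynomial of degree d ≥ 1 and let (a,b) ∈ S³, i.e. |a|² + |b|² = 1, with f(a,b) ≠ 0. Then the set {(a·z/|z|, b·z/|z|) : z ∈ ℂ, z ≠ 0, f(az, bz) = 1} ⊂ S³ has exactly d elements. (The radial projection to S³ of the affine curve {f = 1} meets the Hopf fibre through (a,b) in exactly d points.) -/
open MvPolynomial

lemma eval_homog_scale {d : ℕ} {f : MvPolynomial (Fin 2) ℂ} (hf : f.IsHomogeneous d)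
    (x : Fin 2 → ℂ) (z : ℂ) :
    eval (fun i => z * x i) f = z ^ d * eval x f := by
  rw [eval_eq, eval_eq, Finset.mul_sum]
  refine Finset.sum_congr rfl fun m hm => ?_
  have hdm : ∑ i ∈ m.support, m i = d := by
    have := hf (MvPolynomial.mem_support_iff.mp hm)
    simpa [Finsupp.weight, Finsupp.degree, Finsupp.linearCombination, Finsupp.sum] using this
  calc f.coeff m * ∏ i ∈ m.support, (z * x i) ^ m i
      = f.coeff m * ((∏ i ∈ m.support, z ^ m i) * ∏ i ∈ m.support, x i ^ m i) := by
        rw [← Finset.prod_mul_distrib]; simp [mul_pow]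
    _ = z ^ d * (f.coeff m * ∏ i ∈ m.support, x i ^ m i) := by
        rw [Finset.prod_pow_eq_pow_sum, hdm]; ring

lemma ncard_pow_eq {d : ℕ} (hd : 1 ≤ d) (c : ℂ) (hc : c ≠ 0) :
    {z : ℂ | z ^ d = c}.ncard = d := by
  have hd0 : d ≠ 0 := by omega
  have hζ := Complex.isPrimitiveRoot_exp d hd0
  have hset : {z : ℂ | z ^ d = c} = ↑(Polynomial.nthRoots d c).toFinset := by
    ext z
    simp [Polynomial.mem_nthRoots (by omega : 0 < d)]
  rw [hset, Set.ncard_coe_finset, Multiset.toFinset_card_of_nodup (hζ.nthRoots_nodup hc),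
    hζ.card_nthRoots, if_pos (IsAlgClosed.exists_pow_nat_eq c (by omega))]

/-- The radial projection to `S³` of the affine curve `{f = 1}` meets the Hopf fibre
through `(a,b) ∈ S³` in exactly `d` points, provided `f(a,b) ≠ 0`. -/
theorem stmt2 (d : ℕ) (hd : 1 ≤ d) (f : MvPolynomial (Fin 2) ℂ)
    (hf : f.IsHomogeneous d) (a b : ℂ)
    (hab : ‖a‖ ^ 2 + ‖b‖ ^ 2 = 1)
    (hfab : MvPolynomial.eval ![a, b] f ≠ 0) :
    {p : ℂ × ℂ | ∃ z : ℂ, z ≠ 0 ∧ MvPolynomial.eval ![a * z, b * z] f = 1 ∧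
      p = (a * (z / (‖z‖ : ℂ)), b * (z / (‖z‖ : ℂ)))}.ncard = d := by
  set c : ℂ := (MvPolynomial.eval ![a, b] f)⁻¹ with hc
  have hc0 : c ≠ 0 := inv_ne_zero hfab
  have heval : ∀ z : ℂ, MvPolynomial.eval ![a * z, b * z] f
      = z ^ d * MvPolynomial.eval ![a, b] f := by
    intro z
    have : ![a * z, b * z] = fun i => z * ![a, b] i := by
      funext i; fin_cases i <;> simp [mul_comm]
    rw [this, eval_homog_scale hf]
  have hiff : ∀ z : ℂ, (z ≠ 0 ∧ MvPolynomial.eval ![a * z, b * z] f = 1) ↔ z ^ d = c := by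
    intro z
    rw [heval z]
    constructor
    · rintro ⟨_, h⟩
      rw [hc]; apply eq_inv_of_mul_eq_one_left
      linear_combination h
    · intro h
      have hz : z ≠ 0 := by
        rintro rfl
        rw [zero_pow (by omega)] at h
        exact hc0 h.symm
      refine ⟨hz, ?_⟩
      rw [h, hc, inv_mul_cancel₀ hfab]
  set g : ℂ → ℂ × ℂ := fun z => (a * (z / (‖z‖ : ℂ)), b * (z / (‖z‖ : ℂ)))
  have hset : {p : ℂ × ℂ | ∃ z : ℂ, z ≠ 0 ∧ MvPolynomial.eval ![a * z, b * z] f = 1 ∧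
      p = g z} = g '' {z : ℂ | z ^ d = c} := by
    ext p
    constructor
    · rintro ⟨z, hz, h1, rfl⟩
      exact ⟨z, (hiff z).mp ⟨hz, h1⟩, rfl⟩
    · rintro ⟨z, hz, rfl⟩
      obtain ⟨hz0, h1⟩ := (hiff z).mpr hz
      exact ⟨z, hz0, h1, rfl⟩
  rw [hset, Set.ncard_image_of_injOn, ncard_pow_eq hd c hc0]
  -- injectivity on the roots
  intro z₁ hz₁ z₂ hz₂ hg
  have hab0 : a ≠ 0 ∨ b ≠ 0 := by
    by_contra h
    push_neg at h
    simp [h.1, h.2] at hab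
  simp only [Set.mem_setOf_eq] at hz₁ hz₂
  have habs : ‖z₁‖ = ‖z₂‖ := by
    have h1 : ‖z₁‖ ^ d = ‖c‖ := by
      rw [← norm_pow, hz₁]
    have h2 : ‖z₂‖ ^ d = ‖c‖ := by
      rw [← norm_pow, hz₂]
    exact (pow_left_inj₀ (norm_nonneg _) (norm_nonneg _)
      (by omega)).mp (h1.trans h2.symm)
  have hz10 : z₁ ≠ 0 := by
    rintro rfl; rw [zero_pow (by omega)] at hz₁; exact hc0 hz₁.symm
  have hu : z₁ / (‖z₁‖ : ℂ) = z₂ / (‖z₂‖ : ℂ) := by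
    rcases hab0 with ha | hb
    · have := congrArg Prod.fst hg
      simpa using mul_left_cancel₀ ha this
    · have := congrArg Prod.snd hg
      simpa using mul_left_cancel₀ hb this
  have habs0 : (‖z₁‖ : ℂ) ≠ 0 := by
    simpa using hz10
  rw [habs] at hu habs0
  exact (div_left_inj' habs0).mp hu
end

section
/- Let c ∈ ℂ ∖ {0}, let (a₁,b₁), …, (a_d,b_d) ∈ ℂ² ∖ {(0,0)} be pairwise non-proportional with a₁ ≠ 0, and let f(z₁,z₂) = c·∏_{j=1}^d (b_j z₁ − a_j z₂). For ε > 0 set w_ε = −c·ε·a₁²·∏_{j=2}^d (b_j a₁ − a_j b₁); note w_ε ≠ 0. Then there exists ε₀ > 0 such that for all ε ∈ (0,ε₀) and all θ ∈ ℝ: |e^{−iθ}·f(a₁, b₁ + ε a₁ e^{iθ}) − w_ε| < |w_ε|. (In particular, as θ makes one full turn around the simple zero [a₁:b₁] of f, the argument of f(a_θ,b_θ) along the small circle θ ↦ [a₁ : b₁ + ε a₁ e^{iθ}] makes exactly one complete turn.) -/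
private lemma prod_sub_bound {ι : Type*} (s : Finset ι) (D x : ι → ℂ) (δ : ℝ)
    (hδ : 0 ≤ δ) (hx : ∀ j ∈ s, Norm.norm (x j) ≤ δ) :
    Norm.norm (∏ j ∈ s, (D j - x j) - ∏ j ∈ s, D j) ≤
      ∏ j ∈ s, (Norm.norm (D j) + δ) - ∏ j ∈ s, Norm.norm (D j) := by
  classical
  induction s using Finset.cons_induction with
  | empty => simp
  | cons i s hi ih =>
    have hxi : Norm.norm (x i) ≤ δ := hx i (Finset.mem_cons_self i s)
    have ih' := ih (fun j hj => hx j (Finset.mem_cons_of_mem hj))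
    simp only [Finset.prod_cons]
    set P := ∏ j ∈ s, (D j - x j)
    set Q := ∏ j ∈ s, D j
    set A := ∏ j ∈ s, (Norm.norm (D j) + δ)
    set B := ∏ j ∈ s, Norm.norm (D j)
    have hQB : Norm.norm Q = B := norm_prod s D
    have hBnn : 0 ≤ B := Finset.prod_nonneg fun j _ => norm_nonneg _
    have key : (D i - x i) * P - D i * Q = (D i - x i) * (P - Q) - x i * Q := by ring
    rw [key]
    have h1 : Norm.norm (D i - x i) ≤ Norm.norm (D i) + δ := by
      have h := norm_sub_le (D i) (x i)
      linarith
    have h2 : Norm.norm (P - Q) ≤ A - B := ih'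
    have hPQnn : 0 ≤ Norm.norm (P - Q) := norm_nonneg _
    calc Norm.norm ((D i - x i) * (P - Q) - x i * Q)
        ≤ Norm.norm ((D i - x i) * (P - Q)) + Norm.norm (x i * Q) :=
          norm_sub_le _ _
      _ = Norm.norm (D i - x i) * Norm.norm (P - Q)
            + Norm.norm (x i) * Norm.norm Q := by rw [norm_mul, norm_mul]
      _ ≤ (Norm.norm (D i) + δ) * (A - B) + δ * B := by
          have hxQ : Norm.norm (x i) * Norm.norm Q ≤ δ * B := by
            rw [hQB]
            exact mul_le_mul_of_nonneg_right hxi hBnn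
          have hm := mul_le_mul h1 h2 hPQnn (by positivity)
          linarith
      _ = (Norm.norm (D i) + δ) * A - Norm.norm (D i) * B := by ring

/-- Around a simple zero `[a₁:b₁]` (here the index `0`) of
`f(z₁,z₂) = c·∏ (b_j z₁ - a_j z₂)`, for small `ε > 0` and all `θ`, the value
`e^{-iθ}·f(a₁, b₁ + ε a₁ e^{iθ})` stays within distance `|w_ε|` of
`w_ε = -c·ε·a₁²·∏_{j≥2}(b_j a₁ - a_j b₁) ≠ 0`; in particular the argument of `f`
makes exactly one full turn along the small circle. -/
theorem stmt10 (n : ℕ) (c : ℂ) (hc : c ≠ 0) (a b : Fin (n + 1) → ℂ)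
    (hab : ∀ j, (a j, b j) ≠ (0, 0))
    (hnp : ∀ i j, i ≠ j → ¬ ∃ t : ℂ, (a i, b i) = (t * a j, t * b j))
    (ha0 : a 0 ≠ 0) :
    ∃ ε₀ : ℝ, 0 < ε₀ ∧ ∀ ε : ℝ, 0 < ε → ε < ε₀ →
      (-c * (ε : ℂ) * (a 0) ^ 2 *
          ∏ j ∈ Finset.univ.erase (0 : Fin (n + 1)), (b j * a 0 - a j * b 0)) ≠ 0 ∧
      ∀ θ : ℝ,
        Norm.norm
          (Complex.exp (-(θ : ℂ) * Complex.I) *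
              (c * ∏ j, (b j * a 0 -
                  a j * (b 0 + (ε : ℂ) * a 0 * Complex.exp ((θ : ℂ) * Complex.I))))
            - (-c * (ε : ℂ) * (a 0) ^ 2 *
                ∏ j ∈ Finset.univ.erase (0 : Fin (n + 1)), (b j * a 0 - a j * b 0)))
        < Norm.norm
            (-c * (ε : ℂ) * (a 0) ^ 2 *
              ∏ j ∈ Finset.univ.erase (0 : Fin (n + 1)), (b j * a 0 - a j * b 0)) := by
  classical
  set s : Finset (Fin (n + 1)) := Finset.univ.erase 0 with hs
  set D : Fin (n + 1) → ℂ := fun j => b j * a 0 - a j * b 0 with hD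
  have hDne : ∀ j ∈ s, D j ≠ 0 := by
    intro j hj h
    have hj0 : j ≠ 0 := (Finset.mem_erase.mp hj).1
    apply hnp j 0 hj0
    refine ⟨a j / a 0, ?_⟩
    have hbeq : b j * a 0 = a j * b 0 := by
      have h' : b j * a 0 - a j * b 0 = 0 := h
      linear_combination h'
    have h1 : a j / a 0 * a 0 = a j := div_mul_cancel₀ _ ha0
    have h2 : a j / a 0 * b 0 = b j := by
      rw [div_mul_eq_mul_div, div_eq_iff ha0]
      linear_combination -hbeq
    simp [Prod.ext_iff, h1, h2]
  set B : ℝ := ∏ j ∈ s, Norm.norm (D j) with hB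
  have hBpos : 0 < B :=
    Finset.prod_pos fun j hj => norm_pos_iff.mpr (hDne j hj)
  have hgcont : Continuous fun δ : ℝ => ∏ j ∈ s, (Norm.norm (D j) + δ) :=
    continuous_finset_prod s fun j _ => continuous_const.add continuous_id
  have hg0 : (fun δ : ℝ => ∏ j ∈ s, (Norm.norm (D j) + δ)) 0 < (fun _ : ℝ => 2 * B) 0 := by
    simp only [add_zero]
    rw [← hB]; linarith
  have hev : ∀ᶠ δ in nhds (0 : ℝ), (∏ j ∈ s, (Norm.norm (D j) + δ)) < 2 * B :=
    hgcont.continuousAt.eventually_lt continuousAt_const hg0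
  obtain ⟨δ₀, hδ₀pos, hδ₀⟩ := Metric.eventually_nhds_iff.mp hev
  set M : ℝ := (∑ j, Norm.norm (a j * a 0)) + 1 with hM
  have hMge : ∀ j, Norm.norm (a j * a 0) ≤ M := by
    intro j
    have h1 : Norm.norm (a j * a 0) ≤ ∑ j, Norm.norm (a j * a 0) :=
      Finset.single_le_sum (f := fun j => Norm.norm (a j * a 0))
        (fun j _ => norm_nonneg _) (Finset.mem_univ j)
    rw [hM]; linarith
  have hMpos : 0 < M := by
    have h0 : Norm.norm (a 0 * a 0) ≤ M := hMge 0
    have : (0:ℝ) ≤ ∑ j, Norm.norm (a j * a 0) :=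
      Finset.sum_nonneg fun j _ => norm_nonneg _
    rw [hM]; linarith
  refine ⟨δ₀ / M, by positivity, ?_⟩
  intro ε hε hεlt
  have hεM : ε * M < δ₀ := by
    rw [lt_div_iff₀ hMpos] at hεlt
    exact hεlt
  have hεMnn : 0 ≤ ε * M := by positivity
  have hg : (∏ j ∈ s, (Norm.norm (D j) + ε * M)) < 2 * B := by
    apply hδ₀
    simp only [dist_zero_right, Real.norm_eq_abs, abs_of_nonneg hεMnn]
    exact hεM
  have hwne : (-c * (ε : ℂ) * (a 0) ^ 2 * ∏ j ∈ s, D j) ≠ 0 := by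
    have hεc : ((ε : ℂ)) ≠ 0 := Complex.ofReal_ne_zero.mpr (ne_of_gt hε)
    exact mul_ne_zero (mul_ne_zero (mul_ne_zero (neg_ne_zero.mpr hc) hεc)
      (pow_ne_zero 2 ha0)) (Finset.prod_ne_zero_iff.mpr hDne)
  refine ⟨hwne, ?_⟩
  intro θ
  set e : ℂ := Complex.exp ((θ : ℂ) * Complex.I) with he
  have habs_e : Norm.norm e = 1 := by
    rw [he]; exact Complex.norm_exp_ofReal_mul_I θ
  set x : Fin (n + 1) → ℂ := fun j => a j * ((ε : ℂ) * a 0 * e) with hx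
  have hinv : Complex.exp (-(θ : ℂ) * Complex.I) * e = 1 := by
    rw [he, ← Complex.exp_add]
    have harg : -(θ : ℂ) * Complex.I + (θ : ℂ) * Complex.I = 0 := by ring
    rw [harg, Complex.exp_zero]
  have hsplit :
      Complex.exp (-(θ : ℂ) * Complex.I) *
        (c * ∏ j, (b j * a 0 - a j * (b 0 + (ε : ℂ) * a 0 * e))) =
      -c * (ε : ℂ) * (a 0) ^ 2 * ∏ j ∈ s, (D j - x j) := by
    have h0 : ∏ j, (b j * a 0 - a j * (b 0 + (ε : ℂ) * a 0 * e)) =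
        (b 0 * a 0 - a 0 * (b 0 + (ε : ℂ) * a 0 * e)) *
          ∏ j ∈ s, (b j * a 0 - a j * (b 0 + (ε : ℂ) * a 0 * e)) :=
      (Finset.mul_prod_erase Finset.univ _ (Finset.mem_univ 0)).symm
    have h1 : ∀ j, b j * a 0 - a j * (b 0 + (ε : ℂ) * a 0 * e) = D j - x j := by
      intro j; rw [hD, hx]; ring
    rw [h0]
    simp only [h1]
    have h2 : D 0 - x 0 = -((ε : ℂ) * (a 0) ^ 2 * e) := by
      simp only [hD, hx]; ring
    rw [h2]
    calc Complex.exp (-(θ : ℂ) * Complex.I) *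
          (c * (-((ε : ℂ) * (a 0) ^ 2 * e) * ∏ j ∈ s, (D j - x j)))
        = (Complex.exp (-(θ : ℂ) * Complex.I) * e) *
            (-c * (ε : ℂ) * (a 0) ^ 2 * ∏ j ∈ s, (D j - x j)) := by ring
      _ = -c * (ε : ℂ) * (a 0) ^ 2 * ∏ j ∈ s, (D j - x j) := by rw [hinv, one_mul]
  rw [hsplit]
  have hfac : -c * (ε : ℂ) * (a 0) ^ 2 * ∏ j ∈ s, (D j - x j) -
      -c * (ε : ℂ) * (a 0) ^ 2 * ∏ j ∈ s, D j =
      -c * (ε : ℂ) * (a 0) ^ 2 * (∏ j ∈ s, (D j - x j) - ∏ j ∈ s, D j) := by ring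
  rw [hfac]
  have hεc : ((ε : ℂ)) ≠ 0 := Complex.ofReal_ne_zero.mpr (ne_of_gt hε)
  have hwC : (-c * (ε : ℂ) * (a 0) ^ 2) ≠ 0 :=
    mul_ne_zero (mul_ne_zero (neg_ne_zero.mpr hc) hεc) (pow_ne_zero 2 ha0)
  have hCpos : 0 < Norm.norm (-c * (ε : ℂ) * (a 0) ^ 2) := norm_pos_iff.mpr hwC
  have hxbound : ∀ j ∈ s, Norm.norm (x j) ≤ ε * M := by
    intro j _
    rw [hx]
    simp only [norm_mul, habs_e, Complex.norm_real, Real.norm_eq_abs, mul_one,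
      abs_of_pos hε]
    calc Norm.norm (a j) * (ε * Norm.norm (a 0)) =
          ε * Norm.norm (a j * a 0) := by rw [norm_mul]; ring
      _ ≤ ε * M := mul_le_mul_of_nonneg_left (hMge j) (le_of_lt hε)
  have hbound := prod_sub_bound s D x (ε * M) hεMnn hxbound
  have hdiff : Norm.norm (∏ j ∈ s, (D j - x j) - ∏ j ∈ s, D j) < B := by
    calc Norm.norm (∏ j ∈ s, (D j - x j) - ∏ j ∈ s, D j)
        ≤ (∏ j ∈ s, (Norm.norm (D j) + ε * M)) - B := hbound
      _ < B := by linarith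
  have hQB : Norm.norm (∏ j ∈ s, D j) = B := norm_prod s D
  have hL : Norm.norm (-c * (ε : ℂ) * (a 0) ^ 2 *
      (∏ j ∈ s, (D j - x j) - ∏ j ∈ s, D j)) =
      Norm.norm (-c * (ε : ℂ) * (a 0) ^ 2) *
        Norm.norm (∏ j ∈ s, (D j - x j) - ∏ j ∈ s, D j) := norm_mul _ _
  have hR : Norm.norm (-c * (ε : ℂ) * (a 0) ^ 2 * ∏ j ∈ s, D j) =
      Norm.norm (-c * (ε : ℂ) * (a 0) ^ 2) * B := by rw [norm_mul, hQB]
  rw [hL, hR]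
  exact mul_lt_mul_of_pos_left hdiff hCpos
end

section
/- Let d ≥ 1 and 1 ≤ k ≤ d be integers, and let g₀, g₁, …, g_d : S³ → ℂ be continuous functions. For λ ∈ (0,1), t ∈ ℝ, q ∈ S³ define G^λ_k(t,q) = Σ_{ℓ=0}^d e^{(d−ℓ)t} λ^{k(d−ℓ)+ℓ(ℓ+1)/2} g_{d−ℓ}(q). Then for every ε > 0 there exists λ₀ ∈ (0,1) such that for all λ ∈ (0,λ₀), all t ∈ [0, −(3/4)·log λ], and all q ∈ S³: | G^λ_k(t,q) / (λ^{k(d−k)+k(k+1)/2} · e^{(d−k+1)t}) − (g_{d−k+1}(q) + e^{−t}·g_{d−k}(q)) | < ε. (The rescaled function converges uniformly to G⁺_k(t,q) = g_{d−k+1}(q) + e^{−t}g_{d−k}(q) on [0, −(3/4)log λ] × S³ as λ → 0.) -/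
set_option maxHeartbeats 1000000


/-- Uniform convergence on `[0, −(3/4)log λ] × S³` of the rescaled function
`G^λ_k / (λ^{k(d−k)+k(k+1)/2} e^{(d−k+1)t})` to `G⁺_k(t,q) = g_{d−k+1}(q) + e^{−t} g_{d−k}(q)`
as `λ → 0⁺`. -/
theorem stmt17 (d k : ℕ) (hd : 1 ≤ d) (hk1 : 1 ≤ k) (hkd : k ≤ d)
    (g : ℕ → Metric.sphere (0 : EuclideanSpace ℂ (Fin 2)) 1 → ℂ)
    (hg : ∀ i, i ≤ d → Continuous (g i)) :
    ∀ ε : ℝ, 0 < ε → ∃ lam0 : ℝ, 0 < lam0 ∧ lam0 < 1 ∧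
      ∀ lam : ℝ, 0 < lam → lam < lam0 →
        ∀ t : ℝ, 0 ≤ t → t ≤ -(3 / 4) * Real.log lam →
          ∀ q : Metric.sphere (0 : EuclideanSpace ℂ (Fin 2)) 1,
            Norm.norm
              ((∑ ℓ ∈ Finset.range (d + 1),
                  (Real.exp (((d : ℝ) - ℓ) * t) : ℂ) *
                    ((lam ^ ((k : ℝ) * ((d : ℝ) - ℓ) + ℓ * (ℓ + 1) / 2) : ℝ) : ℂ) *
                    g (d - ℓ) q) /
                (((lam ^ ((k : ℝ) * ((d : ℝ) - k) + k * (k + 1) / 2) : ℝ) : ℂ) *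
                  (Real.exp (((d : ℝ) - k + 1) * t) : ℂ))
              - (g (d - k + 1) q + (Real.exp (-t) : ℂ) * g (d - k) q)) < ε := by
  intro ε hε
  -- uniform bound on the g i, i ≤ d
  have h1 : ∀ i : ℕ, ∃ B : ℝ, 0 ≤ B ∧ (i ≤ d → ∀ q, Norm.norm (g i q) ≤ B) := by
    intro i
    by_cases hi : i ≤ d
    · obtain ⟨B, hB⟩ := (isCompact_range (continuous_norm.comp (hg i hi))).bddAbove
      exact ⟨max B 0, le_max_right _ _, fun _ q => le_trans (hB ⟨q, rfl⟩) (le_max_left _ _)⟩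
    · exact ⟨0, le_refl _, fun h => absurd h hi⟩
  choose B hB0 hB using h1
  set M : ℝ := ∑ i ∈ Finset.range (d + 1), B i with hMdef
  have hM0 : 0 ≤ M := Finset.sum_nonneg fun i _ => hB0 i
  have hMi : ∀ i, i ≤ d → ∀ q, Norm.norm (g i q) ≤ M := by
    intro i hi q
    exact le_trans (hB i hi q)
      (Finset.single_le_sum (fun j _ => hB0 j) (Finset.mem_range.mpr (by omega)))
  set c : ℝ := ε / ((d + 1) * (M + 1)) with hcdef
  have hc0 : 0 < c := div_pos hε (by positivity)
  refine ⟨min (1/2) (c ^ 4), by positivity,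
    lt_of_le_of_lt (min_le_left _ _) (by norm_num), ?_⟩
  intro lam hlam0 hlamlt t ht0 ht1 q
  have hlam1 : lam < 1 :=
    lt_of_lt_of_le hlamlt (le_trans (min_le_left _ _) (by norm_num))
  have hquarter : lam ^ (1/4 : ℝ) < c := by
    have h4 : lam < c ^ 4 := lt_of_lt_of_le hlamlt (min_le_right _ _)
    calc lam ^ (1/4 : ℝ) < (c ^ 4) ^ (1/4 : ℝ) :=
          Real.rpow_lt_rpow hlam0.le h4 (by norm_num)
      _ = c := by
          rw [← Real.rpow_natCast c 4, ← Real.rpow_mul hc0.le]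
          norm_num
  have hq0 : (0:ℝ) ≤ lam ^ (1/4 : ℝ) := (Real.rpow_pos_of_pos hlam0 _).le
  -- notation
  set ek : ℝ := (k : ℝ) * ((d : ℝ) - k) + k * (k + 1) / 2 with hekdef
  set D : ℂ := ((lam ^ ek : ℝ) : ℂ) * (Real.exp (((d : ℝ) - k + 1) * t) : ℂ) with hDdef
  set T : ℕ → ℂ := fun ℓ =>
    (Real.exp (((d : ℝ) - ℓ) * t) : ℂ) *
      ((lam ^ ((k : ℝ) * ((d : ℝ) - ℓ) + ℓ * (ℓ + 1) / 2) : ℝ) : ℂ) * g (d - ℓ) q with hTdef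
  set m : ℕ → ℂ := fun ℓ =>
    (if ℓ = k - 1 then g (d - k + 1) q else 0) +
      (if ℓ = k then (Real.exp (-t) : ℂ) * g (d - k) q else 0) with hmdef
  -- basic nonvanishing
  have hDne1 : ((lam ^ ek : ℝ) : ℂ) ≠ 0 :=
    Complex.ofReal_ne_zero.mpr (Real.rpow_pos_of_pos hlam0 _).ne'
  have hDne2 : ∀ a : ℝ, (Real.exp a : ℂ) ≠ 0 := fun a =>
    Complex.ofReal_ne_zero.mpr (Real.exp_pos a).ne'
  -- generic rewriting of a term divided by D
  have hterm : ∀ (a e : ℝ) (z : ℂ),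
      ((Real.exp a : ℂ) * ((lam ^ e : ℝ) : ℂ) * z) / D
        = ((Real.exp (a - ((d : ℝ) - k + 1) * t) * lam ^ (e - ek) : ℝ) : ℂ) * z := by
    intro a e z
    rw [hDdef, Real.exp_sub, Real.rpow_sub hlam0]
    push_cast
    ring
  -- the ℓ = k-1 term
  have hmem1 : k - 1 ∈ Finset.range (d + 1) := Finset.mem_range.mpr (by omega)
  have hmem2 : k ∈ Finset.range (d + 1) := Finset.mem_range.mpr (by omega)
  have hcast : ((k - 1 : ℕ) : ℝ) = (k : ℝ) - 1 := by
    push_cast [Nat.cast_sub hk1]; ring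
  have hTk1 : T (k - 1) / D = g (d - k + 1) q := by
    rw [hTdef]
    simp only []
    rw [hterm]
    have e1 : ((d : ℝ) - ↑(k - 1)) * t - ((d : ℝ) - k + 1) * t = 0 := by
      rw [hcast]; ring
    have e2 : (k : ℝ) * ((d : ℝ) - ↑(k - 1)) + ↑(k - 1) * (↑(k - 1) + 1) / 2 - ek = 0 := by
      rw [hcast, hekdef]; ring
    rw [e1, e2, Real.exp_zero, Real.rpow_zero, mul_one, Complex.ofReal_one, one_mul,
      show d - (k - 1) = d - k + 1 by omega]
  have hTk : T k / D = (Real.exp (-t) : ℂ) * g (d - k) q := by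
    rw [hTdef]
    simp only []
    rw [hterm]
    have e1 : ((d : ℝ) - ↑k) * t - ((d : ℝ) - k + 1) * t = -t := by ring
    have e2 : (k : ℝ) * ((d : ℝ) - ↑k) + ↑k * (↑k + 1) / 2 - ek = 0 := by
      rw [hekdef]; ring
    rw [e1, e2, Real.rpow_zero, mul_one]
  -- generic bound for the other terms
  have hbound : ∀ ℓ ∈ Finset.range (d + 1),
      Norm.norm (T ℓ / D - m ℓ) ≤ M * lam ^ (1/4 : ℝ) := by
    intro ℓ hℓ
    have hℓd : ℓ ≤ d := by have := Finset.mem_range.mp hℓ; omega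
    by_cases h1 : ℓ = k - 1
    · have hm : m ℓ = g (d - k + 1) q := by
        simp [hmdef, h1, show ¬(k - 1 = k) by omega]
      have hT' : T ℓ / D = g (d - k + 1) q := by rw [h1]; exact hTk1
      rw [hm, hT', sub_self, norm_zero]
      exact mul_nonneg hM0 hq0
    by_cases h2 : ℓ = k
    · have hm : m ℓ = (Real.exp (-t) : ℂ) * g (d - k) q := by
        simp [hmdef, h2, show ¬(k = k - 1) by omega]
      have hT' : T ℓ / D = (Real.exp (-t) : ℂ) * g (d - k) q := by rw [h2]; exact hTk
      rw [hm, hT', sub_self, norm_zero]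
      exact mul_nonneg hM0 hq0
    -- remainder terms
    have hm0 : m ℓ = 0 := by rw [hmdef]; simp [h1, h2]
    rw [hm0, sub_zero, hTdef]
    simp only []
    rw [hterm]
    set x : ℝ := (k : ℝ) - (ℓ : ℝ) - 1 with hxdef
    have ea : ((d : ℝ) - ℓ) * t - ((d : ℝ) - k + 1) * t = x * t := by rw [hxdef]; ring
    have eb : (k : ℝ) * ((d : ℝ) - ℓ) + ↑ℓ * (↑ℓ + 1) / 2 - ek = x * (x + 1) / 2 := by
      rw [hxdef, hekdef]; ring
    rw [ea, eb, norm_mul, Complex.norm_real, Real.norm_eq_abs]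
    have hgle : Norm.norm (g (d - ℓ) q) ≤ M := hMi _ (by omega) q
    have hsle : |Real.exp (x * t) * lam ^ (x * (x + 1) / 2)| ≤ lam ^ (1/4 : ℝ) := by
      rw [abs_of_nonneg (mul_nonneg (Real.exp_pos _).le (Real.rpow_pos_of_pos hlam0 _).le)]
      rcases (by omega : ℓ + 2 ≤ k ∨ k + 1 ≤ ℓ) with hcase | hcase
      · -- x ≥ 1
        have hx1 : (1:ℝ) ≤ x := by
          rw [hxdef]
          have : ((ℓ:ℝ) + 2) ≤ (k:ℝ) := by exact_mod_cast hcase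
          linarith
        have hexp : Real.exp (x * t) ≤ lam ^ (-(3/4) * x) := by
          have h1 : x * t ≤ x * (-(3/4) * Real.log lam) :=
            mul_le_mul_of_nonneg_left ht1 (by linarith)
          calc Real.exp (x * t) ≤ Real.exp (x * (-(3/4) * Real.log lam)) :=
                Real.exp_le_exp.mpr h1
            _ = lam ^ (-(3/4) * x) := by
                rw [Real.rpow_def_of_pos hlam0]; ring_nf
        calc Real.exp (x * t) * lam ^ (x * (x + 1) / 2)
            ≤ lam ^ (-(3/4) * x) * lam ^ (x * (x + 1) / 2) :=
              mul_le_mul_of_nonneg_right hexp (Real.rpow_pos_of_pos hlam0 _).le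
          _ = lam ^ (-(3/4) * x + x * (x + 1) / 2) := (Real.rpow_add hlam0 _ _).symm
          _ ≤ lam ^ (1/4 : ℝ) := by
              apply Real.rpow_le_rpow_of_exponent_ge hlam0 hlam1.le
              nlinarith
      · -- x ≤ -2
        have hx2 : x ≤ -2 := by
          rw [hxdef]
          have : ((k:ℝ) + 1) ≤ (ℓ:ℝ) := by exact_mod_cast hcase
          linarith
        have hexp : Real.exp (x * t) ≤ 1 := by
          rw [Real.exp_le_one_iff]
          exact mul_nonpos_of_nonpos_of_nonneg (by linarith) ht0
        calc Real.exp (x * t) * lam ^ (x * (x + 1) / 2)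
            ≤ 1 * lam ^ (x * (x + 1) / 2) :=
              mul_le_mul_of_nonneg_right hexp (Real.rpow_pos_of_pos hlam0 _).le
          _ = lam ^ (x * (x + 1) / 2) := one_mul _
          _ ≤ lam ^ (1/4 : ℝ) := by
              apply Real.rpow_le_rpow_of_exponent_ge hlam0 hlam1.le
              nlinarith
    calc |Real.exp (x * t) * lam ^ (x * (x + 1) / 2)| * Norm.norm (g (d - ℓ) q)
        ≤ lam ^ (1/4 : ℝ) * M := mul_le_mul hsle hgle (norm_nonneg _) hq0
      _ = M * lam ^ (1/4 : ℝ) := mul_comm _ _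
  -- rewrite the goal
  have hsum : (∑ ℓ ∈ Finset.range (d + 1), T ℓ) / D
        - (g (d - k + 1) q + (Real.exp (-t) : ℂ) * g (d - k) q)
      = ∑ ℓ ∈ Finset.range (d + 1), (T ℓ / D - m ℓ) := by
    rw [Finset.sum_sub_distrib, ← Finset.sum_div]
    congr 1
    rw [hmdef]
    rw [Finset.sum_add_distrib, Finset.sum_ite_eq' _ (k - 1), Finset.sum_ite_eq' _ k,
      if_pos hmem1, if_pos hmem2]
  have hgoal : Norm.norm ((∑ ℓ ∈ Finset.range (d + 1), T ℓ) / D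
      - (g (d - k + 1) q + (Real.exp (-t) : ℂ) * g (d - k) q)) < ε := by
    rw [hsum]
    calc Norm.norm (∑ ℓ ∈ Finset.range (d + 1), (T ℓ / D - m ℓ))
        ≤ ∑ ℓ ∈ Finset.range (d + 1), Norm.norm (T ℓ / D - m ℓ) :=
          norm_sum_le _ _
      _ ≤ ∑ _ℓ ∈ Finset.range (d + 1), M * lam ^ (1/4 : ℝ) :=
          Finset.sum_le_sum hbound
      _ = (d + 1) * (M * lam ^ (1/4 : ℝ)) := by
          rw [Finset.sum_const, Finset.card_range, nsmul_eq_mul]; push_cast; ring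
      _ ≤ (d + 1) * ((M + 1) * lam ^ (1/4 : ℝ)) := by
          apply mul_le_mul_of_nonneg_left _ (by positivity)
          exact mul_le_mul_of_nonneg_right (by linarith) hq0
      _ < (d + 1) * ((M + 1) * c) := by
          apply mul_lt_mul_of_pos_left _ (by positivity)
          exact mul_lt_mul_of_pos_left hquarter (by positivity)
      _ = ε := by
          rw [hcdef]
          field_simp
  exact hgoal
end

section
/- Let d ≥ 1 and 1 ≤ k ≤ d be integers, and let g₀, g₁, …, g_d : S³ → ℂ be continuous functions. For λ ∈ (0,1), t ∈ ℝ, q ∈ S³ define G^λ_k(t,q) = Σ_{ℓ=0}^d e^{(d−ℓ)t} λ^{k(d−ℓ)+ℓ(ℓ+1)/2} g_{d−ℓ}(q). Then for every ε > 0 there exists λ₀ ∈ (0,1) such that for all λ ∈ (0,λ₀), all t ∈ [(3/4)·log λ, 0], and all q ∈ S³: | G^λ_k(t,q) / (λ^{k(d−k)+k(k+1)/2} · e^{(d−k)t}) − (e^{t}·g_{d−k+1}(q) + g_{d−k}(q)) | < ε. (The rescaled function converges uniformly to G⁻_k(t,q) = e^{t}g_{d−k+1}(q) + g_{d−k}(q)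 on [(3/4)log λ, 0] × S³ as λ → 0.) -/
/-- Scalar bound for the non-principal terms. -/
lemma stmt18_aux (k ℓ : ℕ) (hk1 : 1 ≤ k) (hne1 : ℓ ≠ k) (hne2 : ℓ ≠ k - 1)
    (lam t : ℝ) (hlam : 0 < lam) (hlam1 : lam < 1)
    (ht1 : 3 / 4 * Real.log lam ≤ t) (ht2 : t ≤ 0) :
    Real.exp (((k : ℝ) - ℓ) * t) * lam ^ (((ℓ : ℝ) - k) * (((ℓ : ℝ) - k) + 1) / 2)
      ≤ lam ^ ((1 : ℝ) / 4) := by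
  have hcase : ℓ + 2 ≤ k ∨ k + 1 ≤ ℓ := by omega
  rcases hcase with hA | hB
  · have hc : (ℓ : ℝ) + 2 ≤ (k : ℝ) := by exact_mod_cast hA
    have h1 : Real.exp (((k : ℝ) - ℓ) * t) ≤ 1 :=
      Real.exp_le_one_iff.mpr (mul_nonpos_of_nonneg_of_nonpos (by linarith) ht2)
    have h2 : lam ^ (((ℓ : ℝ) - k) * (((ℓ : ℝ) - k) + 1) / 2) ≤ lam ^ ((1 : ℝ) / 4) :=
      Real.rpow_le_rpow_of_exponent_ge hlam hlam1.le
        (by nlinarith [sq_nonneg ((ℓ : ℝ) - (k : ℝ) + 2)])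
    have := mul_le_mul h1 h2 (Real.rpow_nonneg hlam.le _) zero_le_one
    simpa using this
  · have hc : (k : ℝ) + 1 ≤ (ℓ : ℝ) := by exact_mod_cast hB
    have hexp : Real.exp (((k : ℝ) - ℓ) * t) ≤ lam ^ ((3 : ℝ) / 4 * ((k : ℝ) - ℓ)) := by
      rw [Real.rpow_def_of_pos hlam]
      apply Real.exp_le_exp.mpr
      calc ((k : ℝ) - ℓ) * t ≤ ((k : ℝ) - ℓ) * (3 / 4 * Real.log lam) :=
            mul_le_mul_of_nonpos_left ht1 (by linarith)
        _ = Real.log lam * (3 / 4 * ((k : ℝ) - ℓ)) := by ring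
    calc Real.exp (((k : ℝ) - ℓ) * t) * lam ^ (((ℓ : ℝ) - k) * (((ℓ : ℝ) - k) + 1) / 2)
        ≤ lam ^ ((3 : ℝ) / 4 * ((k : ℝ) - ℓ)) * lam ^ (((ℓ : ℝ) - k) * (((ℓ : ℝ) - k) + 1) / 2) :=
          mul_le_mul_of_nonneg_right hexp (Real.rpow_nonneg hlam.le _)
      _ = lam ^ ((3 : ℝ) / 4 * ((k : ℝ) - ℓ) + ((ℓ : ℝ) - k) * (((ℓ : ℝ) - k) + 1) / 2) :=
          (Real.rpow_add hlam _ _).symm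
      _ ≤ lam ^ ((1 : ℝ) / 4) :=
          Real.rpow_le_rpow_of_exponent_ge hlam hlam1.le
            (by nlinarith [sq_nonneg ((ℓ : ℝ) - (k : ℝ) - 1)])

/-- Uniform convergence on `[(3/4)log λ, 0] × S³` of the rescaled function
`G^λ_k / (λ^{k(d−k)+k(k+1)/2} e^{(d−k)t})` to `G⁻_k(t,q) = e^{t} g_{d−k+1}(q) + g_{d−k}(q)`
as `λ → 0⁺`. -/
theorem stmt18 (d k : ℕ) (hd : 1 ≤ d) (hk1 : 1 ≤ k) (hkd : k ≤ d)
    (g : ℕ → Metric.sphere (0 : EuclideanSpace ℂ (Fin 2)) 1 → ℂ)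
    (hg : ∀ i, i ≤ d → Continuous (g i)) :
    ∀ ε : ℝ, 0 < ε → ∃ lam0 : ℝ, 0 < lam0 ∧ lam0 < 1 ∧
      ∀ lam : ℝ, 0 < lam → lam < lam0 →
        ∀ t : ℝ, (3 / 4) * Real.log lam ≤ t → t ≤ 0 →
          ∀ q : Metric.sphere (0 : EuclideanSpace ℂ (Fin 2)) 1,
            ‖
              ((∑ ℓ ∈ Finset.range (d + 1),
                  (Real.exp (((d : ℝ) - ℓ) * t) : ℂ) *
                    ((lam ^ ((k : ℝ) * ((d : ℝ) - ℓ) + ℓ * (ℓ + 1) / 2) : ℝ) : ℂ) *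
                    g (d - ℓ) q) /
                (((lam ^ ((k : ℝ) * ((d : ℝ) - k) + k * (k + 1) / 2) : ℝ) : ℂ) *
                  (Real.exp (((d : ℝ) - k) * t) : ℂ))
              - ((Real.exp t : ℂ) * g (d - k + 1) q + g (d - k) q))‖ < ε := by
  intro ε hε
  have hcont : Continuous (fun q : Metric.sphere (0 : EuclideanSpace ℂ (Fin 2)) 1 =>
      ∑ ℓ ∈ Finset.range (d + 1), ‖g (d - ℓ) q‖) :=
    continuous_finset_sum _ fun ℓ _ => continuous_norm.comp (hg (d - ℓ) (Nat.sub_le d ℓ))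
  obtain ⟨M0, hM0⟩ := (isCompact_range hcont).bddAbove
  set M := max M0 1 with hMdef
  have hM1 : (1 : ℝ) ≤ M := le_max_right _ _
  have hMpos : (0 : ℝ) < M := lt_of_lt_of_le one_pos hM1
  have hMb : ∀ q, ∑ ℓ ∈ Finset.range (d + 1), ‖g (d - ℓ) q‖ ≤ M := fun q =>
    le_trans (hM0 (Set.mem_range_self q)) (le_max_left _ _)
  refine ⟨min (1 / 2) ((ε / M) ^ 4), by positivity,
    lt_of_le_of_lt (min_le_left _ _) (by norm_num), ?_⟩
  intro lam hlam hlamlt t ht1 ht2 q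
  have hlam1 : lam < 1 := lt_of_lt_of_le hlamlt (le_trans (min_le_left _ _) (by norm_num))
  have hquart : lam ^ ((1 : ℝ) / 4) * M < ε := by
    have h1 : lam < (ε / M) ^ 4 := lt_of_lt_of_le hlamlt (min_le_right _ _)
    have h2 : lam ^ ((1 : ℝ) / 4) < ((ε / M) ^ 4) ^ ((1 : ℝ) / 4) :=
      Real.rpow_lt_rpow hlam.le h1 (by norm_num)
    have h3 : (((ε / M) ^ 4 : ℝ)) ^ ((1 : ℝ) / 4) = ε / M := by
      rw [← Real.rpow_natCast (ε / M) 4, ← Real.rpow_mul (by positivity)]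
      norm_num
    rw [h3] at h2
    calc lam ^ ((1 : ℝ) / 4) * M < (ε / M) * M := by
          exact mul_lt_mul_of_pos_right h2 hMpos
      _ = ε := by field_simp
  set T : ℕ → ℂ := fun ℓ =>
    (Real.exp (((d : ℝ) - ℓ) * t) : ℂ) *
      ((lam ^ ((k : ℝ) * ((d : ℝ) - ℓ) + ℓ * (ℓ + 1) / 2) : ℝ) : ℂ) * g (d - ℓ) q with hT
  set Dc : ℂ := ((lam ^ ((k : ℝ) * ((d : ℝ) - k) + k * (k + 1) / 2) : ℝ) : ℂ) *
      (Real.exp (((d : ℝ) - k) * t) : ℂ) with hDdef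
  have hDne : Dc ≠ 0 := by
    rw [hDdef]
    exact mul_ne_zero (Complex.ofReal_ne_zero.mpr (Real.rpow_pos_of_pos hlam _).ne')
      (Complex.ofReal_ne_zero.mpr (Real.exp_pos _).ne')
  have hk_mem : k ∈ Finset.range (d + 1) := Finset.mem_range.mpr (by omega)
  have hk1_mem : k - 1 ∈ (Finset.range (d + 1)).erase k := by
    rw [Finset.mem_erase, Finset.mem_range]; omega
  have hcast : ((k - 1 : ℕ) : ℝ) = (k : ℝ) - 1 := by
    have := Nat.cast_sub (R := ℝ) hk1; simpa using this
  have hTk : T k / Dc = g (d - k) q := by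
    rw [div_eq_iff hDne, hT, hDdef]; ring
  have hTk1 : T (k - 1) / Dc = (Real.exp t : ℂ) * g (d - k + 1) q := by
    rw [div_eq_iff hDne, hT, hDdef]
    simp only
    rw [show d - (k - 1) = d - k + 1 from by omega, hcast]
    rw [show (k : ℝ) * ((d : ℝ) - ((k : ℝ) - 1)) + ((k : ℝ) - 1) * (((k : ℝ) - 1) + 1) / 2
          = (k : ℝ) * ((d : ℝ) - k) + (k : ℝ) * ((k : ℝ) + 1) / 2 from by ring]
    rw [show ((d : ℝ) - ((k : ℝ) - 1)) * t = ((d : ℝ) - (k : ℝ)) * t + t from by ring,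
      Real.exp_add, Complex.ofReal_mul]
    ring
  have e1 := Finset.sum_erase_add (Finset.range (d + 1)) (fun ℓ => T ℓ / Dc) hk_mem
  have e2 := Finset.sum_erase_add ((Finset.range (d + 1)).erase k) (fun ℓ => T ℓ / Dc) hk1_mem
  have key : (∑ ℓ ∈ Finset.range (d + 1), T ℓ) / Dc
      - ((Real.exp t : ℂ) * g (d - k + 1) q + g (d - k) q)
      = ∑ ℓ ∈ ((Finset.range (d + 1)).erase k).erase (k - 1), T ℓ / Dc := by
    rw [Finset.sum_div, ← e1, ← e2]
    rw [hTk, hTk1]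
    ring
  rw [key]
  have hstep : ∀ ℓ ∈ ((Finset.range (d + 1)).erase k).erase (k - 1),
      ‖T ℓ / Dc‖ ≤ lam ^ ((1 : ℝ) / 4) * ‖g (d - ℓ) q‖ := by
    intro ℓ hℓ
    rw [Finset.mem_erase, Finset.mem_erase, Finset.mem_range] at hℓ
    obtain ⟨hne2, hne1, hℓd⟩ := hℓ
    have habs : ‖T ℓ / Dc‖
        = (Real.exp (((k : ℝ) - ℓ) * t) * lam ^ (((ℓ : ℝ) - k) * (((ℓ : ℝ) - k) + 1) / 2))
          * ‖g (d - ℓ) q‖ := by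
      rw [hT, hDdef]
      simp only [norm_div, norm_mul, Complex.norm_real, Real.norm_eq_abs, Real.abs_exp]
      rw [abs_of_pos (Real.rpow_pos_of_pos hlam _), abs_of_pos (Real.rpow_pos_of_pos hlam _)]
      rw [show ((ℓ : ℝ) - k) * (((ℓ : ℝ) - k) + 1) / 2
            = ((k : ℝ) * ((d : ℝ) - ℓ) + (ℓ : ℝ) * ((ℓ : ℝ) + 1) / 2)
              - ((k : ℝ) * ((d : ℝ) - k) + (k : ℝ) * ((k : ℝ) + 1) / 2) from by ring,
        Real.rpow_sub hlam,
        show ((k : ℝ) - ℓ) * t = ((d : ℝ) - ℓ) * t - ((d : ℝ) - k) * t from by ring,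
        Real.exp_sub]
      ring
    rw [habs]
    exact mul_le_mul_of_nonneg_right
      (stmt18_aux k ℓ hk1 hne1 hne2 lam t hlam hlam1 ht1 ht2)
      (norm_nonneg _)
  calc ‖∑ ℓ ∈ ((Finset.range (d + 1)).erase k).erase (k - 1), T ℓ / Dc‖
      ≤ ∑ ℓ ∈ ((Finset.range (d + 1)).erase k).erase (k - 1), ‖T ℓ / Dc‖ :=
        norm_sum_le _ _
    _ ≤ ∑ ℓ ∈ ((Finset.range (d + 1)).erase k).erase (k - 1),
          lam ^ ((1 : ℝ) / 4) * ‖g (d - ℓ) q‖ := Finset.sum_le_sum hstep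
    _ ≤ ∑ ℓ ∈ Finset.range (d + 1), lam ^ ((1 : ℝ) / 4) * ‖g (d - ℓ) q‖ :=
        Finset.sum_le_sum_of_subset_of_nonneg
          (Finset.erase_subset _ _ |>.trans (Finset.erase_subset _ _))
          (fun i _ _ => mul_nonneg (Real.rpow_nonneg hlam.le _) (norm_nonneg _))
    _ = lam ^ ((1 : ℝ) / 4) * ∑ ℓ ∈ Finset.range (d + 1), ‖g (d - ℓ) q‖ :=
        (Finset.mul_sum _ _ _).symm
    _ ≤ lam ^ ((1 : ℝ) / 4) * M :=
        mul_le_mul_of_nonneg_left (hMb q) (Real.rpow_nonneg hlam.le _)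
    _ < ε := hquart
end
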